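/- arXiv:1406.4537 — 3 statements merged into one kernel-verified Lean document; each statement's English description precedes it below -/
import Mathlib

section
/- Let d ≥ 2, κ ∈ (0,1), c₁ = √d, v = 8, α = 240, and let c₃, c₄ > 1 be constants with c₅ = 2c₃c₄. Let scales L_k, N_k, L̃_k (k ≥ 0) satisfy L₀ > 0, 3√d < L̃₀ ≤ L₀³, N_k ≥ 7, L_{k+1} = N_k L_k, L̃_{k+1} = N_k³ L̃_k, and set u₀ = 3(d−1)/(L₀ log(1/κ)), u_k = u₀ v^{−k}. Assume condition (G): u_k N_k ≥ α c₁ for all k ≥ 0 and c₅ N_{k+1}^{3(d−1)} L_{k+1}^{3d−1} κ^{u_{k+1}L_{k+1}} ≤ 1 for all k ≥ 0. Let (φ_k)_{k≥0} be nonnegative reals satisfying, for every k ≥ 0, the recursion φ_{k+1} ≤ c₃ c₄ L̃_{k+2}^{d−1} L_{k+1} { κ^{−10 c₁ L_{k+1}} φ_k^{N_k²/12} + Σ_{0 ≤ m ≤ N_k+1} φ_k^{(⌊N_k⌋+m−1)/2} }. If φ₀ ≤ κ^{u₀ L₀}, then φ_k ≤ κ^{u_k L_k} for all k ≥ 0.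 -/
noncomputable section

open Real Filter

/-- `fseq 0 x = 1`, `fseq 1 x = 8 ^ x`, and `fseq (k+1) = fseq k ∘ fseq 1` for `k ≥ 1`. -/
noncomputable def fseq : ℕ → ℝ → ℝ
  | 0, _ => 1
  | 1, x => (8 : ℝ) ^ x
  | (k+2), x => fseq (k+1) ((8 : ℝ) ^ x)

/-- `u₀ = 3(d-1)/(L₀ log(1/κ))`. -/
noncomputable def u0 (d : ℕ) (L₀ κ : ℝ) : ℝ := 3 * ((d : ℝ) - 1) / (L₀ * Real.log (1 / κ))

/-- `u_k = u₀ v^{-k}` with `v = 8`. -/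
noncomputable def useq (d : ℕ) (L₀ κ : ℝ) (k : ℕ) : ℝ := u0 d L₀ κ / 8 ^ k

/-- The chosen scales `N_k = (α c₁/u₀) f_{[(k+2)/2]}([(k+1)/2]) / f_{[(k+1)/2]}([k/2])`,
with `α = 240`. -/
noncomputable def Nscale (c₁ u₀ : ℝ) (k : ℕ) : ℝ :=
  (240 * c₁ / u₀) * fseq ((k+2)/2) (((k+1)/2 : ℕ) : ℝ) / fseq ((k+1)/2) ((k/2 : ℕ) : ℝ)

/-- The chosen scales `L_k = f_{[(k+1)/2]}([k/2]) (α c₁/u₀)^k L₀`. -/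
noncomputable def Lscale (c₁ u₀ L₀ : ℝ) (k : ℕ) : ℝ :=
  fseq ((k+1)/2) ((k/2 : ℕ) : ℝ) * (240 * c₁ / u₀) ^ k * L₀

/-- The transversal scales `L̃_0 = L̃₀`, `L̃_{k+1} = N_k³ L̃_k`. -/
noncomputable def Ltscale (c₁ u₀ Lt₀ : ℝ) : ℕ → ℝ
  | 0 => Lt₀
  | (k+1) => (Nscale c₁ u₀ k) ^ 3 * Ltscale c₁ u₀ Lt₀ k


set_option maxHeartbeats 1000000 in
/-- Lemma 2.2 (generalized): under condition (G), if `φ₀ ≤ κ^{u₀ L₀}` and the `φ_k`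
satisfy the one-step renormalization recursion, then `φ_k ≤ κ^{u_k L_k}` for all `k`. -/
theorem condition_G_induction (d : ℕ) (hd : 2 ≤ d) (κ : ℝ) (hκ0 : 0 < κ) (hκ1 : κ < 1)
    (c₃ c₄ : ℝ) (hc₃ : 1 < c₃) (hc₄ : 1 < c₄)
    (L N Lt : ℕ → ℝ)
    (hL₀ : 0 < L 0) (hLt₀ : 3 * Real.sqrt d < Lt 0) (hLt₀' : Lt 0 ≤ (L 0) ^ 3)
    (hN : ∀ k, 7 ≤ N k)
    (hLrec : ∀ k, L (k + 1) = N k * L k)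
    (hLtrec : ∀ k, Lt (k + 1) = (N k) ^ 3 * Lt k)
    (hG1 : ∀ k : ℕ, 240 * Real.sqrt d ≤ useq d (L 0) κ k * N k)
    (hG2 : ∀ k : ℕ,
      2 * c₃ * c₄ * (N (k + 1)) ^ (3 * (d - 1)) * (L (k + 1)) ^ (3 * d - 1) *
          κ ^ (useq d (L 0) κ (k + 1) * L (k + 1)) ≤ 1)
    (φ : ℕ → ℝ) (hφ : ∀ k, 0 ≤ φ k)
    (hrec : ∀ k : ℕ,
      φ (k + 1) ≤ c₃ * c₄ * (Lt (k + 2)) ^ (d - 1) * L (k + 1) *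
        (κ ^ (-(10 * Real.sqrt d * L (k + 1))) * (φ k) ^ ((N k) ^ 2 / 12) +
          ∑ m ∈ Finset.range (⌊N k⌋₊ + 2),
            (φ k) ^ ((((⌊N k⌋₊ + m : ℕ) : ℝ) - 1) / 2)))
    (hφ0 : φ 0 ≤ κ ^ (u0 d (L 0) κ * L 0)) :
    ∀ k : ℕ, φ k ≤ κ ^ (useq d (L 0) κ k * L k) := by
  -- basic facts
  have hd1 : (1:ℝ) ≤ (d:ℝ) - 1 := by
    have h2 : (2:ℝ) ≤ (d:ℝ) := by exact_mod_cast hd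
    linarith
  have hlog : 0 < Real.log (1/κ) := Real.log_pos (by rw [lt_div_iff₀ hκ0]; linarith)
  have hu0 : 0 < u0 d (L 0) κ := by
    unfold u0; exact div_pos (by linarith) (mul_pos hL₀ hlog)
  have hup : ∀ k, 0 < useq d (L 0) κ k := by
    intro k; unfold useq; positivity
  have husucc : ∀ k, useq d (L 0) κ (k+1) = useq d (L 0) κ k / 8 := by
    intro k; unfold useq; rw [pow_succ]; ring
  have hLpos : ∀ k, 0 < L k := by
    intro k; induction k with
    | zero => exact hL₀
    | succ n ih => rw [hLrec]; nlinarith [hN n]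
  have hsd2 : Real.sqrt 2 ≤ Real.sqrt d :=
    Real.sqrt_le_sqrt (by exact_mod_cast hd)
  have h98 : (9/8:ℝ) < Real.sqrt 2 := by
    have h := Real.sq_sqrt (by norm_num : (0:ℝ) ≤ 2)
    nlinarith [Real.sqrt_nonneg 2]
  have hL32 : ∀ k, (3/2:ℝ) ≤ L k := by
    have h0 : (3/2:ℝ) ≤ L 0 := by
      have hcube : (27/8:ℝ) < (L 0)^3 := by nlinarith
      nlinarith [sq_nonneg (L 0 - 3/2), sq_nonneg (L 0 + 3/2), hL₀]
    intro k; induction k with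
    | zero => exact h0
    | succ n ih => rw [hLrec]; nlinarith [hN n, hLpos n]
  have hLt' : ∀ k, 0 < Lt k ∧ Lt k ≤ (L k)^3 := by
    intro k; induction k with
    | zero =>
      refine ⟨?_, hLt₀'⟩
      have : (0:ℝ) < Real.sqrt d := lt_of_lt_of_le (by nlinarith) hsd2
      linarith
    | succ n ih =>
      rw [hLtrec, hLrec]
      constructor
      · have h1 : (0:ℝ) < Lt n := ih.1
        have h2 : (0:ℝ) < N n := by linarith [hN n]
        positivity
      · have hNn : (0:ℝ) < N n := by linarith [hN n]
        have h1 : (N n)^3 * Lt n ≤ (N n)^3 * (L n)^3 :=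
          mul_le_mul_of_nonneg_left ih.2 (by positivity)
        calc (N n)^3 * Lt n ≤ (N n)^3 * (L n)^3 := h1
          _ = (N n * L n)^3 := (mul_pow _ _ _).symm
  -- main induction
  intro k
  induction k with
  | zero =>
    have h0 : useq d (L 0) κ 0 = u0 d (L 0) κ := by unfold useq; norm_num
    rw [h0]; exact hφ0
  | succ k ih =>
    have hNk := hN k
    have hN1 := hN (k+1)
    have hLk := hLpos k
    have hL1 := hLpos (k+1)
    have hL1' := hLrec k
    have huk := hup k
    have huk1 := hup (k+1)
    have hukk := husucc k
    have hsd : (0:ℝ) ≤ Real.sqrt d := Real.sqrt_nonneg _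
    have hG1k := hG1 k
    set w : ℝ := useq d (L 0) κ (k+1) * L (k+1) with hw_def
    have hw : 0 < w := mul_pos huk1 hL1
    have hbase : κ ^ (useq d (L 0) κ k * L k) ≤ 1 :=
      Real.rpow_le_one hκ0.le hκ1.le (le_of_lt (mul_pos huk hLk))
    -- bound the first term
    have hA : κ ^ (-(10 * Real.sqrt d * L (k+1))) * (φ k) ^ ((N k)^2 / 12)
        ≤ κ ^ ((7/3) * w) := by
      have he : (0:ℝ) ≤ (N k)^2 / 12 := by positivity
      have h1 : (φ k) ^ ((N k)^2/12) ≤ (κ ^ (useq d (L 0) κ k * L k)) ^ ((N k)^2/12) :=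
        Real.rpow_le_rpow (hφ k) ih he
      have h2 : (κ ^ (useq d (L 0) κ k * L k)) ^ ((N k)^2/12)
          = κ ^ (useq d (L 0) κ k * L k * ((N k)^2/12)) :=
        (Real.rpow_mul hκ0.le _ _).symm
      calc κ ^ (-(10 * Real.sqrt d * L (k+1))) * (φ k) ^ ((N k)^2/12)
          ≤ κ ^ (-(10 * Real.sqrt d * L (k+1))) *
              κ ^ (useq d (L 0) κ k * L k * ((N k)^2/12)) := by
            refine mul_le_mul_of_nonneg_left ?_ (Real.rpow_nonneg hκ0.le _)
            rw [← h2]; exact h1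
        _ = κ ^ (useq d (L 0) κ k * L k * ((N k)^2/12) - 10 * Real.sqrt d * L (k+1)) := by
            rw [← Real.rpow_add hκ0]; ring_nf
        _ ≤ κ ^ ((7/3) * w) := by
            apply Real.rpow_le_rpow_of_exponent_ge hκ0 hκ1.le
            rw [hw_def, hukk, hL1']
            nlinarith [mul_nonneg (mul_nonneg (sub_nonneg.2 hG1k) (by linarith : (0:ℝ) ≤ N k)) hLk.le,
              mul_nonneg (mul_nonneg (mul_nonneg huk.le hLk.le) (by linarith : (0:ℝ) ≤ N k))
                (by linarith : (0:ℝ) ≤ N k - 7)]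
    -- bound each summand
    have hterm : ∀ m ∈ Finset.range (⌊N k⌋₊ + 2),
        (φ k) ^ ((((⌊N k⌋₊ + m : ℕ) : ℝ) - 1) / 2) ≤ κ ^ ((20/7) * w) := by
      intro m _
      have hfl : N k < (⌊N k⌋₊ : ℝ) + 1 := Nat.lt_floor_add_one _
      have hcast : (((⌊N k⌋₊ + m : ℕ) : ℝ)) = (⌊N k⌋₊ : ℝ) + (m : ℝ) := by push_cast; ring
      have hm0 : (0:ℝ) ≤ (m:ℝ) := Nat.cast_nonneg m
      have hem : (0:ℝ) ≤ (((⌊N k⌋₊ + m : ℕ) : ℝ) - 1) / 2 := by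
        rw [hcast]; linarith
      have h1 : (φ k) ^ ((((⌊N k⌋₊ + m : ℕ) : ℝ) - 1) / 2)
          ≤ (κ ^ (useq d (L 0) κ k * L k)) ^ ((((⌊N k⌋₊ + m : ℕ) : ℝ) - 1) / 2) :=
        Real.rpow_le_rpow (hφ k) ih hem
      have hb0 : 0 < κ ^ (useq d (L 0) κ k * L k) := Real.rpow_pos_of_pos hκ0 _
      have h2 : (κ ^ (useq d (L 0) κ k * L k)) ^ ((((⌊N k⌋₊ + m : ℕ) : ℝ) - 1) / 2)
          ≤ (κ ^ (useq d (L 0) κ k * L k)) ^ ((N k - 2) / 2) := by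
        apply Real.rpow_le_rpow_of_exponent_ge hb0 hbase
        rw [hcast]; linarith
      have h3 : (κ ^ (useq d (L 0) κ k * L k)) ^ ((N k - 2) / 2)
          = κ ^ (useq d (L 0) κ k * L k * ((N k - 2)/2)) :=
        (Real.rpow_mul hκ0.le _ _).symm
      have h4 : κ ^ (useq d (L 0) κ k * L k * ((N k - 2)/2)) ≤ κ ^ ((20/7) * w) := by
        apply Real.rpow_le_rpow_of_exponent_ge hκ0 hκ1.le
        rw [hw_def, hukk, hL1']
        nlinarith [mul_nonneg (mul_nonneg huk.le hLk.le) (by linarith : (0:ℝ) ≤ N k - 7)]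
      calc (φ k) ^ ((((⌊N k⌋₊ + m : ℕ) : ℝ) - 1) / 2)
          ≤ (κ ^ (useq d (L 0) κ k * L k)) ^ ((((⌊N k⌋₊ + m : ℕ) : ℝ) - 1) / 2) := h1
        _ ≤ (κ ^ (useq d (L 0) κ k * L k)) ^ ((N k - 2) / 2) := h2
        _ = κ ^ (useq d (L 0) κ k * L k * ((N k - 2)/2)) := h3
        _ ≤ κ ^ ((20/7) * w) := h4
    have hSum : ∑ m ∈ Finset.range (⌊N k⌋₊ + 2),
        (φ k) ^ ((((⌊N k⌋₊ + m : ℕ) : ℝ) - 1) / 2)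
        ≤ ((⌊N k⌋₊ : ℝ) + 2) * κ ^ ((20/7) * w) := by
      have := Finset.sum_le_card_nsmul (Finset.range (⌊N k⌋₊ + 2))
        (fun m => (φ k) ^ ((((⌊N k⌋₊ + m : ℕ) : ℝ) - 1) / 2)) (κ ^ ((20/7) * w)) hterm
      simpa [nsmul_eq_mul, Finset.card_range] using this
    -- prefactor bound
    have hLt2 : Lt (k+2) ≤ (N (k+1) * L (k+1))^3 := by
      have := (hLt' (k+2)).2
      rwa [hLrec (k+1)] at this
    have hLt2pos : (0:ℝ) < Lt (k+2) := (hLt' (k+2)).1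
    have hPC : c₃ * c₄ * (Lt (k+2))^(d-1) * L (k+1)
        ≤ c₃ * c₄ * ((N (k+1))^(3*(d-1)) * (L (k+1))^(3*(d-1))) * L (k+1) := by
      have h5 : (Lt (k+2))^(d-1) ≤ ((N (k+1) * L (k+1))^3)^(d-1) :=
        pow_le_pow_left₀ hLt2pos.le hLt2 _
      have h6 : ((N (k+1) * L (k+1))^3)^(d-1)
          = (N (k+1))^(3*(d-1)) * (L (k+1))^(3*(d-1)) := by
        rw [← pow_mul, mul_pow]
      have h7 : (Lt (k+2))^(d-1) ≤ (N (k+1))^(3*(d-1)) * (L (k+1))^(3*(d-1)) :=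
        h5.trans_eq h6
      have hcc : (0:ℝ) ≤ c₃ * c₄ := by nlinarith
      exact mul_le_mul_of_nonneg_right (mul_le_mul_of_nonneg_left h7 hcc) hL1.le
    -- rewrite hG2
    have hκw : (0:ℝ) < κ ^ w := Real.rpow_pos_of_pos hκ0 _
    have hG2' : 2 * (c₃ * c₄ * ((N (k+1))^(3*(d-1)) * (L (k+1))^(3*(d-1)))) *
        (L (k+1) * L (k+1)) * κ ^ w ≤ 1 := by
      have h3d : 3*d - 1 = (3*(d-1) + 1) + 1 := by omega
      have := hG2 k
      rw [h3d] at this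
      calc 2 * (c₃ * c₄ * ((N (k+1))^(3*(d-1)) * (L (k+1))^(3*(d-1)))) *
            (L (k+1) * L (k+1)) * κ ^ w
          = 2 * c₃ * c₄ * (N (k+1))^(3*(d-1)) * (L (k+1))^((3*(d-1)+1)+1) *
            κ ^ (useq d (L 0) κ (k+1) * L (k+1)) := by
            rw [← hw_def]; ring
        _ ≤ 1 := this
    -- exponent comparisons at the last scale
    have h73 : κ ^ ((7/3) * w) ≤ κ ^ w * κ ^ w := by
      rw [← Real.rpow_add hκ0]
      exact Real.rpow_le_rpow_of_exponent_ge hκ0 hκ1.le (by linarith)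
    have h207 : κ ^ ((20/7) * w) ≤ κ ^ w * κ ^ w := by
      rw [← Real.rpow_add hκ0]
      exact Real.rpow_le_rpow_of_exponent_ge hκ0 hκ1.le (by linarith)
    have hM : ((⌊N k⌋₊ : ℝ) + 2) + 1 ≤ 2 * L (k+1) := by
      have hfle : (⌊N k⌋₊ : ℝ) ≤ N k := Nat.floor_le (by linarith)
      rw [hL1']
      linarith [mul_nonneg (by linarith : (0:ℝ) ≤ N k) (by linarith [hL32 k] : (0:ℝ) ≤ L k - 3/2)]
    -- final combination
    have hC0 : (0:ℝ) ≤ c₃ * c₄ * ((N (k+1))^(3*(d-1)) * (L (k+1))^(3*(d-1))) := by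
      have h1 : (0:ℝ) < N (k+1) := by linarith
      positivity
    have hM0 : (0:ℝ) ≤ (⌊N k⌋₊ : ℝ) + 2 := by positivity
    have hfin : c₃ * c₄ * ((N (k+1))^(3*(d-1)) * (L (k+1))^(3*(d-1))) * L (k+1) *
        (κ ^ ((7/3) * w) + ((⌊N k⌋₊ : ℝ) + 2) * κ ^ ((20/7) * w)) ≤ κ ^ w := by
      set C := c₃ * c₄ * ((N (k+1))^(3*(d-1)) * (L (k+1))^(3*(d-1))) with hC_def
      have H1 : 0 ≤ C * L (k+1) * (κ ^ w * κ ^ w - κ ^ ((7/3) * w)) :=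
        mul_nonneg (mul_nonneg hC0 hL1.le) (by linarith)
      have H2 : 0 ≤ C * L (k+1) * (((⌊N k⌋₊ : ℝ) + 2) * (κ ^ w * κ ^ w - κ ^ ((20/7) * w))) :=
        mul_nonneg (mul_nonneg hC0 hL1.le)
          (mul_nonneg hM0 (by linarith))
      have H3 : 0 ≤ C * L (k+1) * (κ ^ w * κ ^ w) *
          (2 * L (k+1) - (((⌊N k⌋₊ : ℝ) + 2) + 1)) := by
        have hqq : (0:ℝ) ≤ κ ^ w * κ ^ w := by positivity
        exact mul_nonneg (mul_nonneg (mul_nonneg hC0 hL1.le) hqq) (by linarith)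
      have H4 : 0 ≤ (1 - 2 * C * (L (k+1) * L (k+1)) * κ ^ w) * κ ^ w := by
        have h := hG2'
        have : 2 * C * (L (k+1) * L (k+1)) * κ ^ w ≤ 1 := by rw [hC_def]; exact h
        exact mul_nonneg (by linarith) hκw.le
      linarith [H1, H2, H3, H4]
    calc φ (k+1)
        ≤ c₃ * c₄ * (Lt (k+2))^(d-1) * L (k+1) *
          (κ ^ (-(10 * Real.sqrt d * L (k+1))) * (φ k) ^ ((N k)^2/12) +
            ∑ m ∈ Finset.range (⌊N k⌋₊ + 2),
              (φ k) ^ ((((⌊N k⌋₊ + m : ℕ) : ℝ) - 1) / 2)) := hrec k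
      _ ≤ c₃ * c₄ * (Lt (k+2))^(d-1) * L (k+1) *
          (κ ^ ((7/3) * w) + ((⌊N k⌋₊ : ℝ) + 2) * κ ^ ((20/7) * w)) := by
          refine mul_le_mul_of_nonneg_left (add_le_add hA hSum) ?_
          have hcc : (0:ℝ) ≤ c₃ * c₄ := by nlinarith
          positivity
      _ ≤ c₃ * c₄ * ((N (k+1))^(3*(d-1)) * (L (k+1))^(3*(d-1))) * L (k+1) *
          (κ ^ ((7/3) * w) + ((⌊N k⌋₊ : ℝ) + 2) * κ ^ ((20/7) * w)) := by
          refine mul_le_mul_of_nonneg_right hPC ?_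
          have h1 : (0:ℝ) ≤ κ ^ ((7/3) * w) := Real.rpow_nonneg hκ0.le _
          have h2 : (0:ℝ) ≤ κ ^ ((20/7) * w) := Real.rpow_nonneg hκ0.le _
          exact add_nonneg h1 (mul_nonneg hM0 h2)
      _ ≤ κ ^ w := hfin
end
end

section
/- There exists a constant c₆ depending only on d and κ such that whenever L₀ ≥ c₆, the scales L_k and N_k defined from the functions f_k by N_k = (α c₁/u₀) · f_{[(k+2)/2]}([(k+1)/2]) / f_{[(k+1)/2]}([k/2]) and L_{k+1} = N_k L_k (equivalently L_{k+1} = f_{[(k+2)/2]}([(k+1)/2]) (α c₁/u₀)^{k+1} L₀) satisfy condition (G), i.e. (i) u_k N_k ≥ α c₁ for all k ≥ 0, and (ii) c₅ N_{k+1}^{3(d−1)} L_{k+1}^{3d−1} κ^{u_{k+1} L_{k+1}} ≤ 1 for all k ≥ 0. -/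
noncomputable section

open Real Filter

lemma fseq_zero (x : ℝ) : fseq 0 x = 1 := rfl
lemma fseq_one (x : ℝ) : fseq 1 x = (8:ℝ) ^ x := rfl
lemma fseq_ss (k : ℕ) (x : ℝ) : fseq (k+2) x = fseq (k+1) ((8:ℝ)^x) := rfl

lemma log8_ge_two : (2:ℝ) ≤ Real.log 8 := by
  rw [Real.le_log_iff_exp_le (by norm_num)]
  have h := Real.exp_one_lt_d9
  have : Real.exp 2 = (Real.exp 1)^2 := by
    rw [← Real.exp_nat_mul]; norm_num
  nlinarith [Real.exp_pos 1]

lemma log8_le_seven : Real.log 8 ≤ 7 := by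
  have := Real.log_le_sub_one_of_pos (x := 8) (by norm_num)
  linarith

lemma rpow8_ge (t : ℝ) (ht : 0 ≤ t) : 1 + 2*t ≤ (8:ℝ) ^ t := by
  rw [Real.rpow_def_of_pos (by norm_num)]
  have h1 := Real.add_one_le_exp (Real.log 8 * t)
  nlinarith [log8_ge_two]

lemma one_le_fseq : ∀ m (x : ℝ), 0 ≤ x → 1 ≤ fseq m x
  | 0, x, _ => le_refl 1
  | 1, x, hx => Real.one_le_rpow (by norm_num) hx
  | (k+2), x, hx => one_le_fseq (k+1) ((8:ℝ)^x) (Real.rpow_nonneg (by norm_num) x)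

lemma fseq_mono : ∀ m (x y : ℝ), x ≤ y → fseq m x ≤ fseq m y
  | 0, x, y, _ => le_refl 1
  | 1, x, y, h => Real.rpow_le_rpow_left_iff (by norm_num : (1:ℝ) < 8) |>.mpr h
  | (k+2), x, y, h => fseq_mono (k+1) _ _ (Real.rpow_le_rpow_left_iff (by norm_num : (1:ℝ) < 8) |>.mpr h)

lemma fseq_top : ∀ m, 1 ≤ m → ∀ x : ℝ, fseq (m+1) x = (8:ℝ) ^ (fseq m x)
  | 1, _, x => rfl
  | (k+2), _, x => by
    rw [fseq_ss (k+1) x, fseq_top (k+1) (Nat.le_add_left 1 k) ((8:ℝ)^x), ← fseq_ss k x]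

-- fseq m (x+1) ≥ 8 * fseq m x for m ≥ 1, x ≥ 0
lemma fseq_shift : ∀ m, 1 ≤ m → ∀ x : ℝ, 0 ≤ x → 8 * fseq m x ≤ fseq m (x+1)
  | 1, _, x, hx => by
    rw [fseq_one, fseq_one, Real.rpow_add (by norm_num), Real.rpow_one]; ring_nf; exact le_refl _
  | (k+2), _, x, hx => by
    have h1 : 1 ≤ k+1 := Nat.le_add_left 1 k
    rw [fseq_top (k+1) h1 x, fseq_top (k+1) h1 (x+1)]
    have hrec := fseq_shift (k+1) h1 x hx
    have hone : 1 ≤ fseq (k+1) x := one_le_fseq (k+1) x hx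
    have : fseq (k+1) x + 1 ≤ fseq (k+1) (x+1) := by linarith
    calc 8 * (8:ℝ) ^ fseq (k+1) x = (8:ℝ) ^ (fseq (k+1) x + 1) := by
          rw [Real.rpow_add (by norm_num), Real.rpow_one]; ring
      _ ≤ (8:ℝ) ^ fseq (k+1) (x+1) :=
          Real.rpow_le_rpow_left_iff (by norm_num : (1:ℝ)<8) |>.mpr this

lemma sq8 (t : ℝ) (ht : 0 ≤ t) : (1 + t)^2 ≤ (8:ℝ) ^ t := by
  have h2 : (8:ℝ)^t = (8:ℝ)^(t/2) * (8:ℝ)^(t/2) := by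
    rw [← Real.rpow_add (by norm_num)]; ring_nf
  have h3 := rpow8_ge (t/2) (by linarith)
  nlinarith

lemma fseq_le_succ : ∀ m, 1 ≤ m → ∀ x : ℝ, 0 ≤ x → fseq m x ≤ fseq (m+1) x := by
  intro m hm x hx
  rw [fseq_top m hm x]
  have h1 := one_le_fseq m x hx
  have := rpow8_ge (fseq m x) (by linarith)
  linarith

lemma rpow_le_fseq : ∀ m, 1 ≤ m → ∀ x : ℝ, 0 ≤ x → (8:ℝ)^x ≤ fseq m x := by
  intro m hm
  induction m, hm using Nat.le_induction with
  | base => intro x hx; rw [fseq_one]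
  | succ n hn ih =>
    intro x hx
    exact le_trans (ih x hx) (fseq_le_succ n hn x hx)

/-- `F k = fseq ((k+1)/2) (k/2)`. -/
noncomputable def Fk (k : ℕ) : ℝ := fseq ((k+1)/2) ((k/2 : ℕ) : ℝ)

lemma Fk_even (j : ℕ) : Fk (2*j) = fseq j (j:ℝ) := by
  unfold Fk
  congr 1 <;> [skip; congr 1] <;> omega

lemma Fk_odd (j : ℕ) : Fk (2*j+1) = fseq (j+1) (j:ℝ) := by
  unfold Fk
  congr 1 <;> [skip; congr 1] <;> omega

lemma one_le_Fk (k : ℕ) : 1 ≤ Fk k := one_le_fseq _ _ (Nat.cast_nonneg _)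

lemma key1 (k : ℕ) : (8:ℝ)^(k:ℝ) * Fk k ≤ Fk (k+1) := by
  rcases Nat.even_or_odd k with ⟨j, hj⟩ | ⟨j, hj⟩
  · -- k = 2j
    subst_eqs
    have hk : j + j = 2*j := by ring
    rw [hk, Fk_even j, show 2*j+1 = 2*j+1 from rfl, Fk_odd j]
    rcases Nat.eq_zero_or_pos j with rfl | hj1
    · simp [fseq_zero, fseq_one]
    · have hj1' : 1 ≤ j := hj1
      rw [fseq_top j hj1' (j:ℝ)]
      set F := fseq j (j:ℝ) with hF
      have hFj : (8:ℝ)^(j:ℝ) ≤ F := rpow_le_fseq j hj1' _ (Nat.cast_nonneg _)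
      have hjn : (0:ℝ) ≤ (j:ℝ) := Nat.cast_nonneg _
      have h4j : 4*(j:ℝ) ≤ F := by
        have := sq8 (j:ℝ) hjn
        nlinarith [sq_nonneg (1 - (j:ℝ))]
      have hF1 : (1:ℝ) ≤ F := one_le_fseq j _ hjn
      have hFhalf : F ≤ (8:ℝ)^(F/2) := by
        have := sq8 (F/2) (by linarith)
        nlinarith
      have hmono : (8:ℝ)^(F/2) ≤ (8:ℝ)^(F - 2*(j:ℝ)) :=
        Real.rpow_le_rpow_left_iff (by norm_num : (1:ℝ)<8) |>.mpr (by linarith)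
      have hsplit : (8:ℝ)^F = (8:ℝ)^(2*(j:ℝ)) * (8:ℝ)^(F - 2*(j:ℝ)) := by
        rw [← Real.rpow_add (by norm_num)]; ring_nf
      have h8 : (8:ℝ)^((2*j : ℕ):ℝ) = (8:ℝ)^(2*(j:ℝ)) := by push_cast; ring_nf
      rw [h8, hsplit]
      have hp : (0:ℝ) < (8:ℝ)^(2*(j:ℝ)) := Real.rpow_pos_of_pos (by norm_num) _
      have : F ≤ (8:ℝ)^(F - 2*(j:ℝ)) := le_trans hFhalf hmono
      nlinarith
  · -- k = 2j+1
    subst_eqs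
    have hk : 2*j+1+1 = 2*(j+1) := by ring
    rw [hk, Fk_odd j, Fk_even (j+1)]
    rcases Nat.eq_zero_or_pos j with rfl | hj1
    · push_cast
      rw [fseq_one, fseq_one, Real.rpow_zero, Real.rpow_one]
      norm_num
    · have hj1' : 1 ≤ j := hj1
      have hjn : (0:ℝ) ≤ (j:ℝ) := Nat.cast_nonneg _
      push_cast
      rw [fseq_top j hj1' ((j:ℝ)+1), fseq_top j hj1' (j:ℝ)]
      set F := fseq j (j:ℝ) with hF
      have hFj : (8:ℝ)^(j:ℝ) ≤ F := rpow_le_fseq j hj1' _ hjn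
      have h2j : 1 + 2*(j:ℝ) ≤ F := le_trans (rpow8_ge _ hjn) hFj
      have hshift : 8 * F ≤ fseq j ((j:ℝ)+1) := fseq_shift j hj1' _ hjn
      have harg : F + (2*(j:ℝ)+1) ≤ fseq j ((j:ℝ)+1) := by nlinarith
      calc (8:ℝ)^(2*(j:ℝ)+1) * (8:ℝ)^F = (8:ℝ)^(F + (2*(j:ℝ)+1)) := by
            rw [← Real.rpow_add (by norm_num)]; ring_nf
        _ ≤ (8:ℝ)^(fseq j ((j:ℝ)+1)) :=
            Real.rpow_le_rpow_left_iff (by norm_num : (1:ℝ)<8) |>.mpr harg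

lemma key2 (m : ℕ) (hm : 1 ≤ m) : Fk (m+1) ≤ (8:ℝ) ^ (Fk m) := by
  rcases Nat.even_or_odd m with ⟨j, hj⟩ | ⟨j, hj⟩
  · -- m = 2j, j ≥ 1
    subst_eqs
    have hk : j + j = 2*j := by ring
    rw [hk] at hm ⊢
    have hj1 : 1 ≤ j := by omega
    rw [Fk_even j, Fk_odd j, fseq_top j hj1 (j:ℝ)]
  · -- m = 2j+1
    subst_eqs
    have hk : 2*j+1+1 = 2*(j+1) := by ring
    rw [hk, Fk_odd j, Fk_even (j+1)]
    have hjn : (0:ℝ) ≤ (j:ℝ) := Nat.cast_nonneg _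
    have h1j : 1 ≤ j+1 := Nat.le_add_left 1 j
    rw [← fseq_top (j+1) h1j (j:ℝ), fseq_ss j (j:ℝ)]
    have harg : ((j:ℝ)+1) ≤ (8:ℝ)^(j:ℝ) := by
      have := rpow8_ge (j:ℝ) hjn; linarith
    have := fseq_mono (j+1) ((j+1:ℕ):ℝ) ((8:ℝ)^(j:ℝ)) (by push_cast; linarith)
    exact this

lemma log_le_two_sqrt (x : ℝ) (hx : 1 ≤ x) : Real.log x ≤ 2 * Real.sqrt x := by
  have h0 : (0:ℝ) < x := by linarith
  have hls : Real.log x = 2 * Real.log (Real.sqrt x) := by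
    rw [Real.log_sqrt h0.le]; ring
  rw [hls]
  have h1 : 0 < Real.sqrt x := Real.sqrt_pos.mpr h0
  have := Real.log_le_sub_one_of_pos h1
  linarith [Real.sqrt_nonneg x]

lemma nat_le_two_pow (k : ℕ) : ((k:ℝ)+1) ≤ 2^k := by
  have h := Nat.lt_two_pow_self (n := k)
  have h2 : (k+1 : ℕ) ≤ 2^k := h
  exact_mod_cast h2


set_option maxHeartbeats 2000000 in
/-- There is a constant `c₆ = c₆(d,κ)` such that whenever `L₀ ≥ c₆`, the chosen scales
`N_k`, `L_k` satisfy condition (G): `u_k N_k ≥ α c₁` for all `k ≥ 0`, and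
`c₅ N_{k+1}^{3(d-1)} L_{k+1}^{3d-1} κ^{u_{k+1} L_{k+1}} ≤ 1` for all `k ≥ 0`
(with `α = 240`, `c₁ = √d`, `c₅ = 2 c₃ c₄`). -/
theorem chosen_scales_condition_G (d : ℕ) (hd : 2 ≤ d) (κ : ℝ) (hκ0 : 0 < κ) (hκ1 : κ < 1)
    (c₃ c₄ : ℝ) (hc₃ : 1 < c₃) (hc₄ : 1 < c₄) :
    ∃ c₆ : ℝ, ∀ L₀ : ℝ, c₆ ≤ L₀ →
      (∀ k : ℕ,
        240 * Real.sqrt d ≤ useq d L₀ κ k * Nscale (Real.sqrt d) (u0 d L₀ κ) k) ∧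
      (∀ k : ℕ,
        2 * c₃ * c₄ * (Nscale (Real.sqrt d) (u0 d L₀ κ) (k + 1)) ^ (3 * (d - 1)) *
            (Lscale (Real.sqrt d) (u0 d L₀ κ) L₀ (k + 1)) ^ (3 * d - 1) *
            κ ^ (useq d L₀ κ (k + 1) * Lscale (Real.sqrt d) (u0 d L₀ κ) L₀ (k + 1)) ≤ 1) := by
  -- basic quantities
  set lam : ℝ := Real.log (1/κ) with hlam_def
  have hlam : 0 < lam := Real.log_pos (by rw [lt_div_iff₀ hκ0]; linarith)
  have hlogκ : Real.log κ = -lam := by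
    rw [hlam_def, Real.log_div one_ne_zero (ne_of_gt hκ0), Real.log_one]; ring
  have hd1 : (1:ℝ) ≤ (d:ℝ) - 1 := by
    have : (2:ℝ) ≤ (d:ℝ) := by exact_mod_cast hd
    linarith
  have hsd : (1:ℝ) ≤ Real.sqrt d := by
    rw [show (1:ℝ) = Real.sqrt 1 by simp]
    exact Real.sqrt_le_sqrt (by linarith)
  have hsd0 : (0:ℝ) < Real.sqrt d := by linarith
  have hc₅ : (1:ℝ) < 2*c₃*c₄ := by nlinarith
  have hlogc₅ : 0 ≤ Real.log (2*c₃*c₄) := Real.log_nonneg hc₅.le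
  set T : ℝ := 57600 + 2 * Real.log (2*c₃*c₄) with hT_def
  have hT0 : (0:ℝ) < T := by positivity
  set Z : ℝ := (3*(d:ℝ)-1) / (3*Real.sqrt d*lam) with hZ_def
  have hZ0 : 0 ≤ Z := div_nonneg (by linarith) (by positivity)
  refine ⟨1 + T * ((d:ℝ)-1)/(10*Real.sqrt d*lam) + Z^2, ?_⟩
  intro L₀ hL₀
  have hXnn : 0 ≤ T * ((d:ℝ)-1)/(10*Real.sqrt d*lam) := by positivity
  have hZsq : 0 ≤ Z^2 := sq_nonneg Z
  have hL1 : (1:ℝ) ≤ L₀ := by linarith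
  have hL0 : (0:ℝ) < L₀ := by linarith
  have hu0val : u0 d L₀ κ = 3*((d:ℝ)-1)/(L₀*lam) := rfl
  have hu0 : 0 < u0 d L₀ κ := by rw [hu0val]; exact div_pos (by linarith) (mul_pos hL0 hlam)
  set u₀ : ℝ := u0 d L₀ κ with hu₀_def
  set A : ℝ := 240 * Real.sqrt d / u₀ with hA_def
  have hA0 : 0 < A := by positivity
  set B : ℝ := A / 8 with hB_def
  have hB0 : 0 < B := by positivity
  have hlamuL : lam * (u₀ * L₀) = 3*((d:ℝ)-1) := by
    rw [hu0val]
    field_simp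
  have hBL : ((d:ℝ)-1) * B = 10 * (Real.sqrt d * lam) * L₀ := by
    have h8 : B * (lam * (u₀ * L₀)) = 30 * Real.sqrt d * lam * L₀ := by
      rw [hB_def, hA_def]
      field_simp
      ring
    rw [hlamuL] at h8
    linarith
  have hBT : T ≤ B := by
    have h1 : T * ((d:ℝ)-1)/(10*Real.sqrt d*lam) ≤ L₀ := by linarith
    have h2 : T * ((d:ℝ)-1) ≤ 10*Real.sqrt d*lam*L₀ := by
      rw [div_le_iff₀ (by positivity)] at h1
      linarith [h1]
    nlinarith [hBL]
  have hB575 : (57600:ℝ) ≤ B := by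
    rw [hT_def] at hBT; linarith
  have hB1 : (1:ℝ) ≤ B := by linarith
  have hBc₅ : 2 * Real.log (2*c₃*c₄) ≤ B := by rw [hT_def] at hBT; linarith
  have hsqL : (3*(d:ℝ)-1) / (3*Real.sqrt d*lam) ≤ Real.sqrt L₀ := by
    rw [show (3*(d:ℝ)-1) / (3*Real.sqrt d*lam) = Z from rfl]
    have : Z^2 ≤ L₀ := by linarith
    have h2 := Real.sqrt_le_sqrt this
    rwa [Real.sqrt_sq hZ0] at h2
  constructor
  · -- condition (i)
    intro k
    have hN : Nscale (Real.sqrt d) u₀ k = A * Fk (k+1) / Fk k := rfl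
    have hu : useq d L₀ κ k = u₀ / 8^k := rfl
    have hFk0 : (0:ℝ) < Fk k := lt_of_lt_of_le one_pos (one_le_Fk k)
    have hFk1 : (0:ℝ) < Fk (k+1) := lt_of_lt_of_le one_pos (one_le_Fk (k+1))
    have h8k : (0:ℝ) < (8:ℝ)^k := by positivity
    have hkey := key1 k
    rw [Real.rpow_natCast (8:ℝ) k] at hkey
    have heq : u₀ / 8^k * (A * Fk (k+1) / Fk k)
        = 240 * Real.sqrt d * (Fk (k+1) / ((8:ℝ)^k * Fk k)) := by
      rw [hA_def]
      field_simp [ne_of_gt hu0]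
    rw [hu, hN, heq]
    have hratio : 1 ≤ Fk (k+1) / ((8:ℝ)^k * Fk k) :=
      (one_le_div (mul_pos h8k hFk0)).mpr hkey
    have h240 : (0:ℝ) ≤ 240 * Real.sqrt d := by positivity
    have := mul_le_mul_of_nonneg_left hratio h240
    linarith
  · -- condition (ii)
    intro k
    set m : ℕ := k + 1 with hm_def
    have hm1 : 1 ≤ m := Nat.le_add_left 1 k
    set F : ℝ := Fk m with hF_def
    set F' : ℝ := Fk (m+1) with hF'_def
    have hF1 : (1:ℝ) ≤ F := one_le_Fk m
    have hF'1 : (1:ℝ) ≤ F' := one_le_Fk (m+1)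
    have hF0 : (0:ℝ) < F := by linarith
    have hF'0 : (0:ℝ) < F' := by linarith
    have hN : Nscale (Real.sqrt d) u₀ m = A * F' / F := rfl
    have hL : Lscale (Real.sqrt d) u₀ L₀ m = F * A^m * L₀ := rfl
    have hu : useq d L₀ κ m = u₀ / 8^m := rfl
    set N : ℝ := A * F' / F with hNval
    set L : ℝ := F * A^m * L₀ with hLval
    have hN0 : 0 < N := by positivity
    have hL0' : 0 < L := by positivity
    rw [hN, hL, hu]
    set P : ℕ := 3 * (d - 1) with hP_def
    set Q : ℕ := 3 * d - 1 with hQ_def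
    have hPc : ((P:ℕ):ℝ) = 3*((d:ℝ)-1) := by
      rw [hP_def, Nat.cast_mul, Nat.cast_sub (by omega)]; push_cast; ring
    have hQc : ((Q:ℕ):ℝ) = 3*(d:ℝ)-1 := by
      rw [hQ_def, Nat.cast_sub (by omega)]; push_cast; ring
    set Pr : ℝ := 3*((d:ℝ)-1) with hPr_def
    set Qr : ℝ := 3*(d:ℝ)-1 with hQr_def
    have hPr3 : (3:ℝ) ≤ Pr := by rw [hPr_def]; linarith
    have hQrPr : Qr ≤ 2 * Pr := by rw [hQr_def, hPr_def]; linarith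
    have hQr0 : (0:ℝ) < Qr := by rw [hQr_def]; linarith
    -- reduce to a log inequality
    have hκpow : 0 < κ ^ (u₀ / 8^m * L) := Real.rpow_pos_of_pos hκ0 _
    have hlhs : 0 < 2*c₃*c₄ * N^P * L^Q * κ ^ (u₀ / 8^m * L) := by positivity
    rw [show (2:ℝ)*c₃*c₄ * N^P * L^Q * κ ^ (u₀/8^m*L) ≤ 1 ↔
        Real.log (2*c₃*c₄ * N^P * L^Q * κ ^ (u₀/8^m*L)) ≤ 0 from
      (Real.log_nonpos_iff hlhs.le).symm]
    rw [Real.log_mul (by positivity) (ne_of_gt hκpow),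
        Real.log_mul (by positivity) (by positivity),
        Real.log_mul (by positivity) (by positivity),
        Real.log_pow, Real.log_pow, Real.log_rpow hκ0, hlogκ]
    -- the value of the exponent
    have hRval : lam * (u₀/8^m*L) = Pr * F * B^m := by
      have hBm : B^m = A^m / 8^m := by rw [hB_def, div_pow]
      have : lam * (u₀/8^m*L) = (lam * (u₀ * L₀)) * F * (A^m/8^m) := by
        rw [hLval]; field_simp
      rw [this, hlamuL, ← hBm, hPr_def]
    -- auxiliary facts
    have hkey2 : F' ≤ (8:ℝ) ^ F := key2 m hm1
    clear_value lam T Z u₀ A B m F F' N L P Q Pr Qr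
    have hl8a : (2:ℝ) ≤ Real.log 8 := log8_ge_two
    have hl8b : Real.log 8 ≤ 7 := log8_le_seven
    have hlogB0 : 0 ≤ Real.log B := Real.log_nonneg hB1
    have hlogB : Real.log B ≤ 2 * Real.sqrt B := log_le_two_sqrt B hB1
    have hsB : Real.sqrt B * Real.sqrt B = B := Real.mul_self_sqrt hB0.le
    have hsB0 : 0 ≤ Real.sqrt B := Real.sqrt_nonneg B
    have hsB240 : (240:ℝ) ≤ Real.sqrt B := by
      have h1 : (240:ℝ) = Real.sqrt 57600 := by
        rw [show (57600:ℝ) = 240^2 by norm_num, Real.sqrt_sq (by norm_num : (0:ℝ) ≤ 240)]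
      rw [h1]; exact Real.sqrt_le_sqrt hB575
    have hm1r : (1:ℝ) ≤ (m:ℝ) := by exact_mod_cast hm1
    have hmBk : (m:ℝ) ≤ B^k := by
      have h2k := nat_le_two_pow k
      have h2B : (2:ℝ)^k ≤ B^k := pow_le_pow_left₀ (by norm_num) (by linarith) k
      have : ((m:ℕ):ℝ) = (k:ℝ) + 1 := by rw [hm_def]; push_cast; ring
      rw [this]; linarith
    have hBm : B ≤ B^m := le_self_pow₀ hB1 (by omega)
    have hBmk : B^m = B^k * B := by rw [hm_def, pow_succ]
    have hBm0 : (0:ℝ) < B^m := pow_pos hB0 m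
    have hBk0 : (0:ℝ) < B^k := pow_pos hB0 k
    have hA8B : A = 8 * B := by rw [hB_def]; ring
    -- log N bound
    have hNle : Real.log N ≤ Real.log 8 + Real.log B + F * Real.log 8 := by
      have h1 : N ≤ A * (8:ℝ)^F := by
        have e1 : A * F' / F ≤ A * F' :=
          div_le_self (mul_nonneg hA0.le (by linarith)) hF1
        have e2 : A * F' ≤ A * (8:ℝ)^F := mul_le_mul_of_nonneg_left hkey2 hA0.le
        rw [hNval]; linarith
      have h2 : Real.log N ≤ Real.log (A * (8:ℝ)^F) := Real.log_le_log hN0 h1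
      rw [hA8B, Real.log_mul (ne_of_gt (mul_pos (by norm_num) hB0)) (ne_of_gt (Real.rpow_pos_of_pos (by norm_num) F)),
          Real.log_mul (by norm_num) (ne_of_gt hB0), Real.log_rpow (by norm_num)] at h2
      linarith
    -- log L bound
    have hLle : Real.log L ≤ F + (m:ℝ) * (Real.log 8 + Real.log B) + Real.log L₀ := by
      have e0 : Real.log L = Real.log F + (m:ℝ) * Real.log A + Real.log L₀ := by
        rw [hLval, Real.log_mul (ne_of_gt (mul_pos hF0 (pow_pos hA0 m))) (ne_of_gt hL0),
            Real.log_mul (ne_of_gt hF0) (ne_of_gt (pow_pos hA0 m)), Real.log_pow]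
      have e1 : Real.log F ≤ F := by
        have := Real.log_le_sub_one_of_pos hF0; linarith
      have e2 : Real.log A = Real.log 8 + Real.log B := by
        rw [hA8B, Real.log_mul (by norm_num) (ne_of_gt hB0)]
      rw [e0, e2]; linarith [e1]
    -- the five pieces
    set R : ℝ := Pr * F * B^m with hR_def
    have hPrF : 3*((d:ℝ)-1) ≤ Pr * F := by
      have h := mul_le_mul_of_nonneg_left hF1 (show (0:ℝ) ≤ Pr by linarith)
      linarith [h, hPr_def]
    have hPrF0 : (0:ℝ) ≤ Pr * F := mul_nonneg (by linarith) (by linarith)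
    have hRge : 3*((d:ℝ)-1) * B^m ≤ R := by
      rw [hR_def]; exact mul_le_mul_of_nonneg_right hPrF hBm0.le
    have hR3B : 3 * B ≤ R := by
      have q2 := mul_le_mul_of_nonneg_right (show (3:ℝ) ≤ 3*((d:ℝ)-1) by linarith) hBm0.le
      linarith [hRge, hBm]
    have t1 : 5 * Real.log (2*c₃*c₄) ≤ R := by linarith
    have t3 : 5 * (Pr * (F * Real.log 8)) ≤ R := by
      have e1 : 5 * Real.log 8 ≤ B^m := by linarith
      have h2 := mul_le_mul_of_nonneg_left e1 hPrF0
      rw [hR_def]; linarith [h2]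
    have t4 : 5 * (Qr * F) ≤ R := by
      have e1 : (10:ℝ) ≤ B^m := by linarith
      have e2 := mul_le_mul_of_nonneg_left e1 hPrF0
      have e3 : Qr * F ≤ 2*Pr * F :=
        mul_le_mul_of_nonneg_right hQrPr (by linarith)
      rw [hR_def]; linarith [e2, e3]
    have t5 : 5 * (Qr * Real.log L₀) ≤ R := by
      have hlogL₀ : Real.log L₀ ≤ 2*Real.sqrt L₀ := log_le_two_sqrt L₀ hL1
      have hlogL₀0 : 0 ≤ Real.log L₀ := Real.log_nonneg hL1
      have hsL : Real.sqrt L₀ * Real.sqrt L₀ = L₀ := Real.mul_self_sqrt hL0.le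
      have hsL0 : 0 ≤ Real.sqrt L₀ := Real.sqrt_nonneg L₀
      have e1 : Qr ≤ 3*(Real.sqrt d*lam)*Real.sqrt L₀ := by
        rw [div_le_iff₀ (mul_pos (mul_pos (by norm_num) hsd0) hlam)] at hsqL
        rw [hQr_def]; linarith
      have e2 : Qr * Real.log L₀ ≤ Qr * (2*Real.sqrt L₀) :=
        mul_le_mul_of_nonneg_left hlogL₀ hQr0.le
      have e3 : Qr * (2*Real.sqrt L₀) ≤ (3*(Real.sqrt d*lam)*Real.sqrt L₀) * (2*Real.sqrt L₀) :=
        mul_le_mul_of_nonneg_right e1 (by positivity)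
      have e4 : (3*(Real.sqrt d*lam)*Real.sqrt L₀) * (2*Real.sqrt L₀) = 6*(Real.sqrt d*lam)*L₀ := by
        rw [show (3*(Real.sqrt d*lam)*Real.sqrt L₀) * (2*Real.sqrt L₀)
            = 6*(Real.sqrt d*lam)*(Real.sqrt L₀*Real.sqrt L₀) by ring, hsL]
      have e5 : ((d:ℝ)-1) * B ≤ ((d:ℝ)-1) * B^m := mul_le_mul_of_nonneg_left hBm (by linarith)
      linarith [hBL, hRge, e2, e3, e4, e5]
    have t2 : 5 * ((Pr + Qr*(m:ℝ)) * (Real.log 8 + Real.log B)) ≤ R := by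
      have e1 : Pr + Qr*(m:ℝ) ≤ 12*((d:ℝ)-1)*(m:ℝ) := by
        have cA : Pr * 1 ≤ Pr * (m:ℝ) := mul_le_mul_of_nonneg_left hm1r (by linarith)
        have cB : (Pr + Qr) * (m:ℝ) ≤ (12*((d:ℝ)-1)) * (m:ℝ) := by
          apply mul_le_mul_of_nonneg_right _ (by linarith)
          rw [hPr_def, hQr_def]; linarith
        linarith [cA, cB]
      have e2 : Real.log 8 + Real.log B ≤ 3*Real.sqrt B := by linarith
      have e3 : (0:ℝ) ≤ Pr + Qr*(m:ℝ) := by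
        have := mul_nonneg hQr0.le (le_trans zero_le_one hm1r)
        linarith
      have e4 : (Pr + Qr*(m:ℝ)) * (Real.log 8 + Real.log B)
          ≤ (12*((d:ℝ)-1)*(m:ℝ)) * (3*Real.sqrt B) :=
        mul_le_mul e1 e2 (by linarith) (mul_nonneg (by linarith) (by linarith))
      have e5 : (m:ℝ) * Real.sqrt B ≤ B^k * Real.sqrt B :=
        mul_le_mul_of_nonneg_right hmBk hsB0
      have e6 : (12*((d:ℝ)-1)*(m:ℝ)) * (3*Real.sqrt B) = 36*((d:ℝ)-1)*((m:ℝ)*Real.sqrt B) := by ring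
      have e7 : 36*((d:ℝ)-1)*((m:ℝ)*Real.sqrt B) ≤ 36*((d:ℝ)-1)*(B^k*Real.sqrt B) :=
        mul_le_mul_of_nonneg_left e5 (by linarith)
      -- R ≥ 3(d-1) B^m = 3(d-1) B^k (√B √B) ≥ 720 (d-1) B^k √B
      have g1 : (240:ℝ)*Real.sqrt B ≤ Real.sqrt B * Real.sqrt B :=
        mul_le_mul_of_nonneg_right hsB240 hsB0
      have g2 : B^k*((240:ℝ)*Real.sqrt B) ≤ B^k*(Real.sqrt B*Real.sqrt B) :=
        mul_le_mul_of_nonneg_left g1 hBk0.le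
      have g3 : B^m = B^k*(Real.sqrt B*Real.sqrt B) := by rw [hBmk, hsB]
      have g4 : 3*((d:ℝ)-1)*(B^k*(240*Real.sqrt B)) ≤ 3*((d:ℝ)-1)*B^m := by
        rw [g3]; exact mul_le_mul_of_nonneg_left g2 (by linarith)
      have g5 : (0:ℝ) ≤ ((d:ℝ)-1)*(B^k*Real.sqrt B) :=
        mul_nonneg (by linarith) (mul_nonneg hBk0.le hsB0)
      linarith [e4, e6, e7, g4, g5, hRge]
    -- core inequality
    have hcore : Real.log (2*c₃*c₄) + (P:ℝ)*Real.log N + (Q:ℝ)*Real.log L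
        ≤ lam * (u₀/8^m*L) := by
      rw [hRval, hPc, hQc]
      have w1 : Pr*Real.log N ≤ Pr*(Real.log 8 + Real.log B + F*Real.log 8) :=
        mul_le_mul_of_nonneg_left hNle (by linarith)
      have w2 : Qr*Real.log L ≤ Qr*(F + (m:ℝ)*(Real.log 8 + Real.log B) + Real.log L₀) :=
        mul_le_mul_of_nonneg_left hLle hQr0.le
      linarith [t1, t2, t3, t4, t5, w1, w2]
    linarith [hcore]
end
end

section
/- For every integer n ≥ 1 and all real numbers a, b ≥ 1, one has f_n(a+b) ≥ f_n(a) · f_n(b). -/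
noncomputable section

open Real Filter

lemma fseq_mono_s6 : ∀ n, Monotone (fseq n)
  | 0 => monotone_const
  | 1 => fun x y h => Real.rpow_le_rpow_of_exponent_le (by norm_num) h
  | (k+2) => fun x y h => by
      show fseq (k+1) _ ≤ fseq (k+1) _
      exact fseq_mono_s6 (k+1) (Real.rpow_le_rpow_of_exponent_le (by norm_num) h)

lemma fseq_one_le : ∀ n, ∀ x : ℝ, 1 ≤ x → 1 ≤ fseq n x
  | 0, x, _ => le_refl 1
  | 1, x, hx => Real.one_le_rpow (by norm_num) (le_trans zero_le_one hx)
  | (k+2), x, hx => by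
      show 1 ≤ fseq (k+1) ((8:ℝ) ^ x)
      exact fseq_one_le (k+1) _ (Real.one_le_rpow (by norm_num) (le_trans zero_le_one hx))


lemma fseq_superadd_aux : ∀ n, ∀ a b : ℝ, 1 ≤ a → 1 ≤ b →
    fseq (n+1) a * fseq (n+1) b ≤ fseq (n+1) (a + b)
  | 0, a, b, _, _ => by
      show (8:ℝ) ^ a * (8:ℝ) ^ b ≤ (8:ℝ) ^ (a+b)
      rw [Real.rpow_add (by norm_num)]
  | (k+1), a, b, ha, hb => by
      show fseq (k+1) ((8:ℝ)^a) * fseq (k+1) ((8:ℝ)^b) ≤ fseq (k+1) ((8:ℝ)^(a+b))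
      have h8a : (8:ℝ) ≤ (8:ℝ)^a := by
        calc (8:ℝ) = (8:ℝ)^(1:ℝ) := (Real.rpow_one 8).symm
        _ ≤ _ := Real.rpow_le_rpow_of_exponent_le (by norm_num) ha
      have h8b : (8:ℝ) ≤ (8:ℝ)^b := by
        calc (8:ℝ) = (8:ℝ)^(1:ℝ) := (Real.rpow_one 8).symm
        _ ≤ _ := Real.rpow_le_rpow_of_exponent_le (by norm_num) hb
      have hsum : (8:ℝ)^a + (8:ℝ)^b ≤ (8:ℝ)^(a+b) := by
        rw [Real.rpow_add (by norm_num)]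
        nlinarith
      calc fseq (k+1) ((8:ℝ)^a) * fseq (k+1) ((8:ℝ)^b)
          ≤ fseq (k+1) ((8:ℝ)^a + (8:ℝ)^b) := fseq_superadd_aux k ((8:ℝ)^a) ((8:ℝ)^b) (by linarith) (by linarith)
        _ ≤ fseq (k+1) ((8:ℝ)^(a+b)) := fseq_mono_s6 (k+1) hsum

/-- For every integer `n ≥ 1` and all reals `a, b ≥ 1`, `f_n(a+b) ≥ f_n(a)·f_n(b)`. -/
theorem fseq_superadditive (n : ℕ) (hn : 1 ≤ n) (a b : ℝ) (ha : 1 ≤ a) (hb : 1 ≤ b) :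
    fseq n a * fseq n b ≤ fseq n (a + b) := by
  obtain ⟨m, rfl⟩ : ∃ m, n = m + 1 := ⟨n-1, by omega⟩
  exact fseq_superadd_aux m a b ha hb
end
end
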